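/- For all integers i ≥ 1 and 1 ≤ j ≤ i + 1, the cap product ζⱼ^{2^{i+1−j}} ∩ Sq^{2^i} equals ζ_{j−1}^{2^{i+1−j}} in A; that is, the left coefficient of the right-factor monomial ξ₁^{2^i} in Δ(ζⱼ^{2^{i+1−j}}) is ζ_{j−1}^{2^{i+1−j}}. -/

import Mathlib

/-!
STATEMENT 5: For all `i ≥ 1` and `1 ≤ j ≤ i + 1`, the cap product
`ζⱼ^{2^{i+1−j}} ∩ Sq^{2^i} = ζ_{j−1}^{2^{i+1−j}}` in the dual Steenrod algebra `A`.

Here `A = MvPolynomial ℕ (ZMod 2)` with `X i = ξ_{i+1}` (`ξ₀ = 1`), `Δ` is the Milnor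
coproduct, the conjugates satisfy `ζ₀ = 1`, `ζₙ = Σ_{j<n} ξ_{n−j}^{2^j}·ζⱼ`, and the cap
product `p ∩ Sq^k` is the coefficient of the monomial `ξ₁^k` in the right tensor factor of
`Δ p` (implemented as `(id ⊗ coeff_{ξ₁^k})` followed by `A ⊗ 𝔽₂ ≃ A`).
-/

open MvPolynomial TensorProduct

noncomputable section

abbrev A5 := MvPolynomial ℕ (ZMod 2)

/-- `xiA 0 = 1` (the convention `ξ₀ = 1`) and `xiA (i+1)` is the variable `ξ_{i+1}`. -/
def xiA : ℕ → A5
  | 0 => 1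
  | i + 1 => X i

/-- The cap product `p ∩ Sq^k`: the coefficient of the basis monomial `ξ₁ᵏ`
(exponent function `Finsupp.single 0 k`) in the right tensor factor of `Δ p`. -/
def capSq (Δ : A5 →ₐ[ZMod 2] A5 ⊗[ZMod 2] A5) (k : ℕ) (p : A5) : A5 :=
  TensorProduct.rid (ZMod 2) A5
    (LinearMap.lTensor A5 (MvPolynomial.lcoeff (ZMod 2) (Finsupp.single 0 k)) (Δ p))

-- auxiliary algebra maps
def gmap : A5 →ₐ[ZMod 2] Polynomial A5 :=
  MvPolynomial.aeval (fun n => if n = 0 then Polynomial.X else 0)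

def cmap : A5 →ₐ[ZMod 2] Polynomial A5 :=
  (Algebra.ofId A5 (Polynomial A5)).restrictScalars (ZMod 2)

lemma cmap_apply (a : A5) : cmap a = Polynomial.C a := rfl

def pmap : A5 ⊗[ZMod 2] A5 →ₐ[ZMod 2] Polynomial A5 :=
  Algebra.TensorProduct.productMap cmap gmap

lemma coeff_gmap (b : A5) (k : ℕ) :
    (gmap b).coeff k = MvPolynomial.C (MvPolynomial.coeff (Finsupp.single 0 k) b) := by
  induction b using MvPolynomial.induction_on' with
  | monomial d c =>
      rw [gmap, aeval_monomial, coeff_monomial]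
      by_cases hd : ∀ n ∈ d.support, n = 0
      · have hds : d = Finsupp.single 0 (d 0) := by
          ext n
          rcases eq_or_ne n 0 with rfl | hn
          · simp
          · rw [Finsupp.single_eq_of_ne' (Ne.symm hn)]
            by_contra h
            exact hn (hd n (Finsupp.mem_support_iff.mpr h))
        have hprod : (d.prod fun n e => (if n = 0 then (Polynomial.X : Polynomial A5) else 0) ^ e)
            = Polynomial.X ^ (d 0) := by
          rw [hds]
          rcases eq_or_ne (d 0) 0 with h0 | h0
          · simp [h0]
          · rw [Finsupp.prod_single_index] <;> simp
        rw [hprod]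
        have hal : (algebraMap (ZMod 2) (Polynomial A5)) c = Polynomial.C (MvPolynomial.C c) := rfl
        rw [hal, Polynomial.coeff_C_mul, Polynomial.coeff_X_pow]
        by_cases hk : d 0 = k
        · have hdk : d = Finsupp.single 0 k := by rw [hds, hk]
          simp [hdk, hk]
        · have hne : d ≠ Finsupp.single 0 k := fun h => hk (by rw [h]; simp)
          simp [hne, Ne.symm hk]
      · push_neg at hd
        obtain ⟨n, hn, hn0⟩ := hd
        have hprod : (d.prod fun n e => (if n = 0 then (Polynomial.X : Polynomial A5) else 0) ^ e)
            = 0 := by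
          apply Finset.prod_eq_zero hn
          simp only [if_neg hn0]
          exact zero_pow (Finsupp.mem_support_iff.mp hn)
        have hdk : d ≠ Finsupp.single 0 k := by
          intro h
          apply hn0
          have := Finsupp.mem_support_iff.mp hn
          rw [h] at this
          by_contra h2
          exact this (Finsupp.single_eq_of_ne' (Ne.symm h2))
        rw [hprod, mul_zero, if_neg hdk]
        simp
  | add p q hp hq => simp [map_add, hp, hq]

lemma bridge (k : ℕ) (z : A5 ⊗[ZMod 2] A5) :
    TensorProduct.rid (ZMod 2) A5
      (LinearMap.lTensor A5 (MvPolynomial.lcoeff (ZMod 2) (Finsupp.single 0 k)) z)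
      = (pmap z).coeff k := by
  induction z using TensorProduct.induction_on with
  | zero => simp
  | tmul a b =>
      rw [LinearMap.lTensor_tmul, TensorProduct.rid_tmul]
      rw [pmap, Algebra.TensorProduct.productMap_apply_tmul, cmap_apply,
        Polynomial.coeff_C_mul, coeff_gmap]
      rw [lcoeff_apply, MvPolynomial.smul_eq_C_mul, mul_comm]
  | add x y hx hy => simp [map_add, hx, hy]

section Main

variable (zeta : ℕ → A5) (Δ : A5 →ₐ[ZMod 2] A5 ⊗[ZMod 2] A5)

lemma theta_xi
    (hΔ : ∀ n : ℕ, Δ (xiA (n + 1)) =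
      ∑ i ∈ Finset.range (n + 2), (xiA (n + 1 - i) ^ 2 ^ i) ⊗ₜ[ZMod 2] xiA i) (n : ℕ) :
    pmap (Δ (xiA (n + 1))) = cmap (xiA (n + 1)) + cmap (xiA n ^ 2) * Polynomial.X := by
  rw [hΔ, map_sum]
  have hsub : Finset.range 2 ⊆ Finset.range (n + 2) := Finset.range_subset_range.mpr (by omega)
  rw [← Finset.sum_subset hsub]
  · rw [Finset.sum_range_succ, Finset.sum_range_one]
    rw [pmap, Algebra.TensorProduct.productMap_apply_tmul,
      Algebra.TensorProduct.productMap_apply_tmul]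
    have h0 : gmap (xiA 0) = 1 := by simp [xiA, gmap]
    have h1 : gmap (xiA 1) = Polynomial.X := by simp [xiA, gmap]
    simp [h0, h1, pow_zero, pow_one]
  · intro i hi hi2
    have : 2 ≤ i := by simp at hi2; omega
    obtain ⟨i', rfl⟩ : ∃ i', i = i' + 2 := ⟨i - 2, by omega⟩
    have hg : gmap (xiA (i' + 2)) = 0 := by simp [xiA, gmap]
    rw [pmap, Algebra.TensorProduct.productMap_apply_tmul, hg, mul_zero]

lemma two_eq_zero : (2 : Polynomial A5) = 0 := by
  have : ((2 : ℕ) : Polynomial A5) = 0 := CharP.cast_eq_zero (Polynomial A5) 2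
  simpa using this

lemma add_self (x : Polynomial A5) : x + x = 0 := by
  have : (2 : Polynomial A5) * x = 0 := by rw [two_eq_zero, zero_mul]
  linear_combination this

def T (n : ℕ) : Polynomial A5 :=
  ∑ a ∈ Finset.range (n + 1), cmap (zeta a) * Polynomial.X ^ (2 ^ n - 2 ^ a)

lemma Trec (j : ℕ) :
    Polynomial.X ^ (2 ^ j) * T zeta j = T zeta (j + 1) + cmap (zeta (j + 1)) := by
  rw [T, T, Finset.sum_range_succ (n := j + 1)]
  have h1 : (2 : ℕ) ^ (j + 1) - 2 ^ (j + 1) = 0 := by omega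
  rw [h1, pow_zero, mul_one, Finset.mul_sum]
  have h2 : ∀ a ∈ Finset.range (j + 1),
      Polynomial.X ^ 2 ^ j * (cmap (zeta a) * Polynomial.X ^ (2 ^ j - 2 ^ a))
        = cmap (zeta a) * Polynomial.X ^ (2 ^ (j + 1) - 2 ^ a) := by
    intro a ha
    have haj : a ≤ j := by simpa [Nat.lt_succ_iff] using ha
    have hle : 2 ^ a ≤ 2 ^ j := Nat.pow_le_pow_right (by norm_num) haj
    have hpow : (2:ℕ) ^ (j + 1) = 2 ^ j + 2 ^ j := by rw [pow_succ]; omega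
    have : 2 ^ (j + 1) - 2 ^ a = 2 ^ j + (2 ^ j - 2 ^ a) := by rw [hpow, Nat.add_sub_assoc hle]
    rw [this, pow_add]; ring
  rw [Finset.sum_congr rfl h2, add_assoc, add_self, add_zero]

lemma add_selfA (x : A5) : x + x = 0 := by
  have h2 : ((2 : ℕ) : A5) = 0 := CharP.cast_eq_zero A5 2
  have : (2 : A5) * x = 0 := by
    have : (2 : A5) = 0 := by simpa using h2
    rw [this, zero_mul]
  linear_combination this

lemma char2_sum_shift (F : ℕ → Polynomial A5) (m : ℕ) :
    (∑ j ∈ Finset.range (m + 1), F j) + ∑ j ∈ Finset.range (m + 1), F (j + 1)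
      = F 0 + F (m + 1) := by
  have h1 := Finset.sum_range_succ' F (m + 1)
  have h2 := Finset.sum_range_succ F (m + 1)
  linear_combination h2 - h1 + add_self (∑ j ∈ Finset.range (m + 1), F j) - add_self (F 0)

lemma char2_sum_shiftA (F : ℕ → A5) (m : ℕ) :
    (∑ j ∈ Finset.range (m + 1), F j) + ∑ j ∈ Finset.range (m + 1), F (j + 1)
      = F 0 + F (m + 1) := by
  have h1 := Finset.sum_range_succ' F (m + 1)
  have h2 := Finset.sum_range_succ F (m + 1)
  linear_combination h2 - h1 + add_selfA (∑ j ∈ Finset.range (m + 1), F j) - add_selfA (F 0)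

lemma theta_zeta (hz0 : zeta 0 = 1)
    (hzS : ∀ n : ℕ, zeta (n + 1) =
      ∑ j ∈ Finset.range (n + 1), xiA (n + 1 - j) ^ 2 ^ j * zeta j)
    (hΔ : ∀ n : ℕ, Δ (xiA (n + 1)) =
      ∑ i ∈ Finset.range (n + 2), (xiA (n + 1 - i) ^ 2 ^ i) ⊗ₜ[ZMod 2] xiA i) :
    ∀ n : ℕ, pmap (Δ (zeta n)) = T zeta n := by
  intro n
  induction n using Nat.strong_induction_on with
  | _ n ih =>
    match n, ih with
    | 0, _ =>
      rw [hz0, map_one, map_one, T]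
      simp [hz0]
    | m + 1, ih =>
      have hT0 : T zeta 0 = 1 := by simp [T, hz0]
      have hfx : ∀ j, j ≤ m → pmap (Δ (xiA (m + 1 - j))) =
          cmap (xiA (m + 1 - j)) + cmap (xiA (m - j) ^ 2) * Polynomial.X := by
        intro j hj
        have h : m + 1 - j = (m - j) + 1 := by omega
        rw [h]
        exact theta_xi Δ hΔ (m - j)
      have step : ∀ j ∈ Finset.range (m + 1),
          pmap (Δ (xiA (m + 1 - j) ^ 2 ^ j * zeta j)) =
            cmap (xiA (m + 1 - j) ^ 2 ^ j) * T zeta j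
            + (cmap (xiA (m + 1 - (j + 1)) ^ 2 ^ (j + 1)) * T zeta (j + 1)
               + cmap (xiA (m + 1 - (j + 1)) ^ 2 ^ (j + 1) * zeta (j + 1))) := by
        intro j hj
        have hjm : j ≤ m := by simpa [Nat.lt_succ_iff] using hj
        have hsub : m + 1 - (j + 1) = m - j := by omega
        have hx2 : (xiA (m - j) ^ 2) ^ 2 ^ j = xiA (m - j) ^ 2 ^ (j + 1) := by
          rw [← pow_mul, pow_succ, mul_comm (2 ^ j) 2]
        rw [map_mul, map_mul, map_pow, map_pow, hfx j hjm,
          ih j (Nat.lt_succ_of_le hjm),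
          add_pow_char_pow, mul_pow, ← map_pow, ← map_pow, hx2, hsub]
        rw [add_mul, mul_assoc, Trec zeta j, map_mul]
        ring
      rw [hzS m, map_sum, map_sum, Finset.sum_congr rfl step,
        Finset.sum_add_distrib, Finset.sum_add_distrib]
      have hA := char2_sum_shift (fun j => cmap (xiA (m + 1 - j) ^ 2 ^ j) * T zeta j) m
      have hB := char2_sum_shiftA (fun j => xiA (m + 1 - j) ^ 2 ^ j * zeta j) m
      beta_reduce at hA hB
      rw [← hzS m] at hB
      have hB' : (∑ j ∈ Finset.range (m + 1), xiA (m + 1 - (j + 1)) ^ 2 ^ (j + 1) * zeta (j + 1))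
          = xiA (m + 1) := by
        have e0 : xiA (m + 1 - 0) ^ 2 ^ 0 * zeta 0 = xiA (m + 1) := by
          simp [hz0]
        have em : xiA (m + 1 - (m + 1)) ^ 2 ^ (m + 1) * zeta (m + 1) = zeta (m + 1) := by
          simp [Nat.sub_self, xiA]
        rw [e0, em] at hB
        linear_combination hB
      have hC : (∑ j ∈ Finset.range (m + 1),
          cmap (xiA (m + 1 - (j + 1)) ^ 2 ^ (j + 1) * zeta (j + 1))) = cmap (xiA (m + 1)) := by
        rw [← map_sum, hB']
      rw [← add_assoc, hA, hC]
      have e0 : cmap (xiA (m + 1 - 0) ^ 2 ^ 0) * T zeta 0 = cmap (xiA (m + 1)) := by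
        simp [hT0]
      have em : cmap (xiA (m + 1 - (m + 1)) ^ 2 ^ (m + 1)) * T zeta (m + 1) = T zeta (m + 1) := by
        simp [Nat.sub_self, xiA]
      rw [e0, em]
      linear_combination add_self (cmap (xiA (m + 1)))

end Main

theorem stmt_5
    (zeta : ℕ → A5) (hz0 : zeta 0 = 1)
    (hzS : ∀ n : ℕ, zeta (n + 1) =
      ∑ j ∈ Finset.range (n + 1), xiA (n + 1 - j) ^ 2 ^ j * zeta j)
    (Δ : A5 →ₐ[ZMod 2] A5 ⊗[ZMod 2] A5)
    (hΔ : ∀ n : ℕ, Δ (xiA (n + 1)) =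
      ∑ i ∈ Finset.range (n + 2), (xiA (n + 1 - i) ^ 2 ^ i) ⊗ₜ[ZMod 2] xiA i) :
    ∀ i j : ℕ, 1 ≤ i → 1 ≤ j → j ≤ i + 1 →
      capSq Δ (2 ^ i) (zeta j ^ 2 ^ (i + 1 - j)) = zeta (j - 1) ^ 2 ^ (i + 1 - j) := by
  intro i j hi hj hji
  set m := i + 1 - j with hm
  have hjm : j + m = i + 1 := by omega
  unfold capSq
  rw [bridge, map_pow, map_pow, theta_zeta zeta Δ hz0 hzS hΔ j, T,
    sum_pow_char_pow]
  have hterm : ∀ a ∈ Finset.range (j + 1),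
      (cmap (zeta a) * Polynomial.X ^ (2 ^ j - 2 ^ a)) ^ 2 ^ m
        = Polynomial.C (zeta a ^ 2 ^ m) * Polynomial.X ^ (2 ^ (i + 1) - 2 ^ (a + m)) := by
    intro a ha
    have haj : a ≤ j := by simpa [Nat.lt_succ_iff] using ha
    have hE : (2 ^ j - 2 ^ a) * 2 ^ m = 2 ^ (i + 1) - 2 ^ (a + m) := by
      rw [Nat.sub_mul, ← pow_add, ← pow_add, hjm]
    rw [mul_pow, ← map_pow, cmap_apply, ← pow_mul, hE]
  rw [Finset.sum_congr rfl hterm, Polynomial.finset_sum_coeff]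
  have hcoeff : ∀ a ∈ Finset.range (j + 1),
      (Polynomial.C (zeta a ^ 2 ^ m) * Polynomial.X ^ (2 ^ (i + 1) - 2 ^ (a + m))).coeff (2 ^ i)
        = if a = j - 1 then zeta (j - 1) ^ 2 ^ m else 0 := by
    intro a ha
    have haj : a ≤ j := by simpa [Nat.lt_succ_iff] using ha
    have ham : a + m ≤ i + 1 := by omega
    have hii : (2:ℕ) ^ (i + 1) = 2 ^ i + 2 ^ i := by rw [pow_succ]; omega
    have hle : (2:ℕ) ^ (a + m) ≤ 2 ^ (i + 1) := Nat.pow_le_pow_right (by norm_num) ham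
    rw [Polynomial.coeff_C_mul, Polynomial.coeff_X_pow]
    by_cases hcase : a = j - 1
    · have hai : a + m = i := by omega
      have : 2 ^ (i + 1) - 2 ^ (a + m) = 2 ^ i := by rw [hai, hii, Nat.add_sub_cancel]
      rw [this, if_pos rfl, if_pos hcase, mul_one, hcase]
    · have hne : 2 ^ i ≠ 2 ^ (i + 1) - 2 ^ (a + m) := by
        intro h
        have heq : (2:ℕ) ^ (i + 1) = 2 ^ i + 2 ^ (a + m) :=
          (Nat.sub_eq_iff_eq_add hle).mp h.symm
        have h2 : (2:ℕ) ^ (a + m) = 2 ^ i :=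
          (Nat.add_left_cancel (hii.symm.trans heq)).symm
        have : a + m = i := Nat.pow_right_injective (le_refl 2) h2
        omega
      rw [if_neg hne, if_neg hcase, mul_zero]
  rw [Finset.sum_congr rfl hcoeff, Finset.sum_ite_eq' (Finset.range (j + 1)) (j - 1)
    (fun _ => zeta (j - 1) ^ 2 ^ m)]
  rw [if_pos (Finset.mem_range.mpr (by omega))]

end
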